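/- Let k ≥ 2 be an integer, let ρ > 0 be real, and let α₁, …, α_n be complex numbers such that |α_j| ≤ ρ for all j and α_{j₀} = 0 for at least one index j₀. Then for every real number x with x ≤ −ρ/sin(π/(2k)), the sum over j = 1, …, n of the real parts of (−1)^{k−1}/(x − α_j)^k is strictly negative. -/

import Mathlib

set_option maxHeartbeats 1000000

open Real Complex

lemma re_pow_eq' (k : ℕ) (w : ℂ) :
    (w ^ k).re = ‖w‖ ^ k * Real.cos (k * w.arg) := by
  conv_lhs => rw [← Complex.norm_mul_exp_arg_mul_I w]
  rw [mul_pow, ← Complex.exp_nat_mul, show ((k : ℂ) * (w.arg * I)) = ((k * w.arg : ℝ) : ℂ) * I by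
    push_cast; ring, Complex.exp_mul_I]
  simp [Complex.mul_re, ← Complex.ofReal_pow, Complex.cos_ofReal_re, Complex.cos_ofReal_im,
    Complex.sin_ofReal_im, ← Complex.ofReal_mul]

/-- Let `k ≥ 2`, `ρ > 0`, and `α₁, …, αₙ` be complex numbers of modulus at most `ρ`,
one of which is `0`. Then for every real `x ≤ -ρ·csc(π/(2k))`, the sum of the real
parts of `(-1)^(k-1)/(x - αⱼ)^k` is strictly negative. -/
theorem stmt13 (k : ℕ) (hk : 2 ≤ k) (ρ : ℝ) (hρ : 0 < ρ) (n : ℕ) (α : Fin n → ℂ)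
    (hα : ∀ j, ‖α j‖ ≤ ρ) (h0 : ∃ j₀, α j₀ = 0)
    (x : ℝ) (hx : x ≤ -(ρ / Real.sin (Real.pi / (2 * k)))) :
    ∑ j, (((-1 : ℂ) ^ (k - 1)) / ((x : ℂ) - α j) ^ k).re < 0 := by
  obtain ⟨j₀, hj₀⟩ := h0
  have hkR : (2:ℝ) ≤ (k:ℝ) := by exact_mod_cast hk
  set θ := Real.pi / (2 * k) with hθdef
  have hθpos : 0 < θ := by
    have := Real.pi_pos
    positivity
  have hθle : θ ≤ Real.pi / 4 := by
    rw [hθdef]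
    apply div_le_div_of_nonneg_left Real.pi_pos.le (by norm_num) (by linarith)
  have hθhalf : θ < Real.pi / 2 := by linarith [Real.pi_pos]
  have hs : 0 < Real.sin θ :=
    Real.sin_pos_of_pos_of_lt_pi hθpos (by linarith [Real.pi_pos])
  have hs1 : Real.sin θ < 1 := by
    have hcos : 0 < Real.cos θ := Real.cos_pos_of_mem_Ioo ⟨by linarith, hθhalf⟩
    nlinarith [Real.sin_sq_add_cos_sq θ]
  set c := -x with hcdef
  have hc : ρ / Real.sin θ ≤ c := by rw [hcdef]; linarith
  have hcρ : ρ ≤ c * Real.sin θ := by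
    rw [div_le_iff₀ hs] at hc; linarith
  have hcpos : 0 < c := lt_of_lt_of_le (by positivity) hc
  have hρc : ρ < c := by nlinarith
  have hkθ : (k:ℝ) * θ = Real.pi / 2 := by
    rw [hθdef]
    field_simp
  -- per-term analysis
  have hterm : ∀ j, (((-1 : ℂ) ^ (k - 1)) / ((x : ℂ) - α j) ^ k).re ≤ 0 ∧
      (α j = 0 → (((-1 : ℂ) ^ (k - 1)) / ((x : ℂ) - α j) ^ k).re < 0) := by
    intro j
    set w : ℂ := α j - (x:ℂ) with hwdef
    set a := (α j).re with hadef
    set b := (α j).im with hbdef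
    have hab : a^2 + b^2 ≤ ρ^2 := by
      have h1 := hα j
      have h2 : ‖α j‖ ^ 2 = a^2 + b^2 := by
        rw [Complex.sq_norm, Complex.normSq_apply]; ring
      nlinarith [norm_nonneg (α j)]
    have hwre : w.re = a + c := by simp [hwdef, hcdef]; ring
    have hwim : w.im = b := by simp [hwdef, hbdef]
    have haρ : |a| ≤ ρ := le_trans (Complex.abs_re_le_norm (α j)) (hα j)
    have hwrepos : 0 < w.re := by
      rw [hwre]
      cases' abs_le.mp haρ with h1 h2
      linarith
    have hw0 : w ≠ 0 := by
      intro h; rw [h] at hwrepos; simp at hwrepos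
    have habsw : 0 < ‖w‖ := norm_pos_iff.mpr hw0
    have habsw2 : ‖w‖ ^ 2 = (a+c)^2 + b^2 := by
      rw [Complex.sq_norm, Complex.normSq_apply, hwre, hwim]; ring
    -- |im w| ≤ sin θ * |w|
    have h1 : 0 ≤ (ρ^2 - a^2 - b^2) * (c^2 - ρ^2) :=
      mul_nonneg (by linarith) (by nlinarith)
    have h2 : b^2 ≤ (Real.sin θ * ‖w‖)^2 := by
      have hX : 0 ≤ (a+c)^2 + b^2 := by positivity
      have hρ2 : ρ^2 ≤ (c * Real.sin θ)^2 := pow_le_pow_left₀ hρ.le hcρ 2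
      have hbc : b^2 * c^2 ≤ ρ^2 * ((a+c)^2 + b^2) := by
        linarith [h1, sq_nonneg (a*c + ρ^2)]
      have h3 : b^2 * c^2 ≤ (c * Real.sin θ)^2 * ((a+c)^2 + b^2) :=
        le_trans hbc (mul_le_mul_of_nonneg_right hρ2 hX)
      have h5 : b^2 * c^2 ≤ (Real.sin θ^2 * ((a+c)^2 + b^2)) * c^2 := by
        linear_combination h3
      have h6 : b^2 ≤ Real.sin θ^2 * ((a+c)^2 + b^2) :=
        le_of_mul_le_mul_right h5 (by positivity)
      calc b^2 ≤ Real.sin θ^2 * ((a+c)^2 + b^2) := h6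
        _ = (Real.sin θ * ‖w‖)^2 := by rw [mul_pow, habsw2]
    have h4 : |b| ≤ Real.sin θ * ‖w‖ := by
      rw [← Real.sqrt_sq_eq_abs]
      calc Real.sqrt (b^2) ≤ Real.sqrt ((Real.sin θ * ‖w‖)^2) := Real.sqrt_le_sqrt h2
        _ = Real.sin θ * ‖w‖ := Real.sqrt_sq (by positivity)
    -- |arg w| ≤ θ
    have hφhalf : |w.arg| ≤ Real.pi / 2 := Complex.abs_arg_le_pi_div_two_iff.2 hwrepos.le
    obtain ⟨hφ1, hφ2⟩ := abs_le.mp hφhalf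
    have hsinabs : Real.sin |w.arg| = |Real.sin w.arg| := by
      rcases abs_cases w.arg with ⟨he, hpos⟩ | ⟨he, hneg⟩
      · rw [he, _root_.abs_of_nonneg (Real.sin_nonneg_of_nonneg_of_le_pi hpos
          (by linarith [Real.pi_pos]))]
      · rw [he, Real.sin_neg, _root_.abs_of_nonpos
          (Real.sin_nonpos_of_nonpos_of_neg_pi_le hneg.le (by linarith [Real.pi_pos]))]
    have hsinle : Real.sin |w.arg| ≤ Real.sin θ := by
      rw [hsinabs]
      have := Complex.sin_arg w
      rw [this, hwim, abs_div, abs_of_pos habsw, div_le_iff₀ habsw]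
      linarith [h4]
    have hargle : |w.arg| ≤ θ := by
      by_contra h
      push_neg at h
      have := Real.strictMonoOn_sin ⟨by linarith, by linarith⟩
        ⟨by linarith [abs_nonneg w.arg, Real.pi_pos], hφhalf⟩ h
      linarith
    -- cos (k * arg w) ≥ 0
    have hcosnn : 0 ≤ Real.cos ((k:ℝ) * w.arg) := by
      apply Real.cos_nonneg_of_mem_Icc
      have habs : |(k:ℝ) * w.arg| ≤ Real.pi / 2 := by
        rw [abs_mul, Nat.abs_cast]
        calc (k:ℝ) * |w.arg| ≤ (k:ℝ) * θ := by
              apply mul_le_mul_of_nonneg_left hargle (by positivity)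
          _ = Real.pi / 2 := hkθ
      cases' abs_le.mp habs with h1 h2
      exact ⟨h1, h2⟩
    have hrenn : 0 ≤ (w ^ k).re := by
      rw [re_pow_eq']
      exact mul_nonneg (by positivity) hcosnn
    -- rewrite the term
    have hzw : ((x:ℂ) - α j) = -w := by rw [hwdef]; ring
    have hwkne : w ^ k ≠ 0 := pow_ne_zero _ hw0
    have hterm_eq : (((-1 : ℂ) ^ (k - 1)) / ((x : ℂ) - α j) ^ k).re
        = -((w ^ k).re / Complex.normSq (w ^ k)) := by
      have hk1 : (-1:ℂ)^k = (-1:ℂ)^(k-1) * (-1) := by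
        conv_lhs => rw [show k = (k-1) + 1 by omega]
        rw [pow_succ]
      have : ((-1 : ℂ) ^ (k - 1)) / ((x : ℂ) - α j) ^ k = -(w ^ k)⁻¹ := by
        rw [hzw, show ((-w : ℂ))^k = (-1)^k * w^k by rw [neg_pow], hk1]
        have hne : ((-1:ℂ))^(k-1) ≠ 0 := by
          apply pow_ne_zero; norm_num
        field_simp
      rw [this, Complex.neg_re, Complex.inv_re]
    constructor
    · rw [hterm_eq]
      simp only [neg_nonpos]
      exact div_nonneg hrenn (Complex.normSq_nonneg _)
    · intro hα0
      rw [hterm_eq]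
      have hwc : w = (c:ℂ) := by rw [hwdef, hα0, hcdef]; push_cast; ring
      have hre : (w ^ k).re = c ^ k := by
        rw [hwc, ← Complex.ofReal_pow, Complex.ofReal_re]
      have hrepos : 0 < (w ^ k).re := by rw [hre]; positivity
      have hnsq : 0 < Complex.normSq (w ^ k) := Complex.normSq_pos.2 hwkne
      simp only [neg_lt, neg_zero]
      exact div_pos hrepos hnsq
  have hsum := Finset.sum_lt_sum (s := Finset.univ)
    (f := fun j => (((-1 : ℂ) ^ (k - 1)) / ((x : ℂ) - α j) ^ k).re)
    (g := fun _ => (0:ℝ)) (fun i _ => (hterm i).1)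
    ⟨j₀, Finset.mem_univ _, (hterm j₀).2 hj₀⟩
  simpa using hsum
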